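/- Under the permutation null distribution, for all integers 0 ≤ t1 < t2 ≤ n, the variance of U_diff^π(t1,t2) equals 4(t2 − t1)(n − t2 + t1)(n−1)·(r1² − r0²). -/

import Mathlib

open Finset

namespace RING

/-- `U1^π(t1,t2)`: sum of `R (π i) (π j)` over indices (1-based `i,j ∈ {1,…,n}`,
represented by `Fin n` with `i` standing for index `i+1`) with `t1 < i ≤ t2` and
`t1 < j ≤ t2`. -/
noncomputable def U1 (n : ℕ) (R : Fin n → Fin n → ℝ) (π : Equiv.Perm (Fin n))
    (t1 t2 : ℕ) : ℝ :=
  ∑ i : Fin n, ∑ j : Fin n,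
    if t1 ≤ (i : ℕ) ∧ (i : ℕ) < t2 ∧ t1 ≤ (j : ℕ) ∧ (j : ℕ) < t2 then R (π i) (π j) else 0

/-- `U2^π(t1,t2)`: sum of `R (π i) (π j)` over indices with `i ≤ t1` or `i > t2`,
and `j ≤ t1` or `j > t2`. -/
noncomputable def U2 (n : ℕ) (R : Fin n → Fin n → ℝ) (π : Equiv.Perm (Fin n))
    (t1 t2 : ℕ) : ℝ :=
  ∑ i : Fin n, ∑ j : Fin n,
    if ((i : ℕ) < t1 ∨ t2 ≤ (i : ℕ)) ∧ ((j : ℕ) < t1 ∨ t2 ≤ (j : ℕ)) then R (π i) (π j) else 0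

/-- Expectation under the permutation null distribution (uniform over all `n!`
permutations). -/
noncomputable def pexp (n : ℕ) (f : Equiv.Perm (Fin n) → ℝ) : ℝ :=
  (∑ π : Equiv.Perm (Fin n), f π) / (Nat.factorial n)

/-- Variance under the permutation null distribution. -/
noncomputable def pvar (n : ℕ) (f : Equiv.Perm (Fin n) → ℝ) : ℝ :=
  pexp n (fun π => (f π - pexp n f) ^ 2)

/-- Covariance under the permutation null distribution. -/
noncomputable def pcov (n : ℕ) (f g : Equiv.Perm (Fin n) → ℝ) : ℝ :=
  pexp n (fun π => (f π - pexp n f) * (g π - pexp n g))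

/-- `R̄_{i·} = (Σ_j R_{ij})/(n-1)`. -/
noncomputable def Rbar (n : ℕ) (R : Fin n → Fin n → ℝ) (i : Fin n) : ℝ :=
  (∑ j : Fin n, R i j) / ((n : ℝ) - 1)

/-- `r0 = (1/n) Σ_i R̄_{i·}`. -/
noncomputable def r0 (n : ℕ) (R : Fin n → Fin n → ℝ) : ℝ :=
  (∑ i : Fin n, Rbar n R i) / n

/-- `r1² = (1/n) Σ_i R̄_{i·}²`. -/
noncomputable def r1sq (n : ℕ) (R : Fin n → Fin n → ℝ) : ℝ :=
  (∑ i : Fin n, (Rbar n R i) ^ 2) / n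

/-- `r_d² = (1/(n(n-1))) Σ_i Σ_j R_{ij}²`. -/
noncomputable def rdsq (n : ℕ) (R : Fin n → Fin n → ℝ) : ℝ :=
  (∑ i : Fin n, ∑ j : Fin n, (R i j) ^ 2) / ((n : ℝ) * ((n : ℝ) - 1))

/-- `A(t) = 2t(t-1)(n-t)(n-t-1)/((n-2)(n-3))`. -/
noncomputable def A (n t : ℕ) : ℝ :=
  2 * (t : ℝ) * ((t : ℝ) - 1) * ((n : ℝ) - t) * ((n : ℝ) - t - 1) /
    (((n : ℝ) - 2) * ((n : ℝ) - 3))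

/-- `B(t) = 4t(n-t)(t-1)(t-2)(n-1)/((n-2)(n-3))`. -/
noncomputable def B (n t : ℕ) : ℝ :=
  4 * (t : ℝ) * ((n : ℝ) - t) * ((t : ℝ) - 1) * ((t : ℝ) - 2) * ((n : ℝ) - 1) /
    (((n : ℝ) - 2) * ((n : ℝ) - 3))

/-- `U_diff^π = U1^π − U2^π`. -/
noncomputable def Udiff (n : ℕ) (R : Fin n → Fin n → ℝ) (π : Equiv.Perm (Fin n))
    (t1 t2 : ℕ) : ℝ :=
  U1 n R π t1 t2 - U2 n R π t1 t2

/-- `U_w^π = ((n−t2+t1−1)·U1^π + (t2−t1−1)·U2^π)/(n−2)`. -/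
noncomputable def Uw (n : ℕ) (R : Fin n → Fin n → ℝ) (π : Equiv.Perm (Fin n))
    (t1 t2 : ℕ) : ℝ :=
  (((n : ℝ) - t2 + t1 - 1) * U1 n R π t1 t2 + ((t2 : ℝ) - t1 - 1) * U2 n R π t1 t2) /
    ((n : ℝ) - 2)

/-- Standardized `Z_w^π(t1,t2)`. -/
noncomputable def Zw (n : ℕ) (R : Fin n → Fin n → ℝ) (π : Equiv.Perm (Fin n))
    (t1 t2 : ℕ) : ℝ :=
  (Uw n R π t1 t2 - pexp n (fun σ => Uw n R σ t1 t2)) /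
    Real.sqrt (pvar n (fun σ => Uw n R σ t1 t2))

/-- Standardized `Z_diff^π(t1,t2)`. -/
noncomputable def Zdiff (n : ℕ) (R : Fin n → Fin n → ℝ) (π : Equiv.Perm (Fin n))
    (t1 t2 : ℕ) : ℝ :=
  (Udiff n R π t1 t2 - pexp n (fun σ => Udiff n R σ t1 t2)) /
    Real.sqrt (pvar n (fun σ => Udiff n R σ t1 t2))

end RING

open RING


section Aux

open Equiv

lemma sum_perm_mul_right {n : ℕ} (τ : Equiv.Perm (Fin n)) (F : Equiv.Perm (Fin n) → ℝ) :
    ∑ π : Equiv.Perm (Fin n), F (π * τ) = ∑ π : Equiv.Perm (Fin n), F π :=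
  Equiv.sum_comp (Equiv.mulRight τ) F

lemma sum_perm_apply_indep {n : ℕ} (i j : Fin n) (g : Fin n → ℝ) :
    ∑ π : Equiv.Perm (Fin n), g (π i) = ∑ π : Equiv.Perm (Fin n), g (π j) := by
  have := sum_perm_mul_right (Equiv.swap i j) (fun π => g (π i))
  simpa [Equiv.Perm.mul_apply, Equiv.swap_apply_left] using this.symm

lemma sum_perm_apply {n : ℕ} (i : Fin n) (g : Fin n → ℝ) :
    (n : ℝ) * ∑ π : Equiv.Perm (Fin n), g (π i) = (n.factorial : ℝ) * ∑ k, g k := by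
  have h1 : ∑ j : Fin n, ∑ π : Equiv.Perm (Fin n), g (π j)
      = (n : ℝ) * ∑ π : Equiv.Perm (Fin n), g (π i) := by
    rw [Finset.sum_congr rfl (fun j _ => sum_perm_apply_indep j i g)]
    simp [Finset.card_univ, mul_comm]
  have h2 : ∑ j : Fin n, ∑ π : Equiv.Perm (Fin n), g (π j)
      = (n.factorial : ℝ) * ∑ k, g k := by
    rw [Finset.sum_comm]
    have : ∀ π : Equiv.Perm (Fin n), ∑ j : Fin n, g (π j) = ∑ k, g k :=
      fun π => Equiv.sum_comp π g
    rw [Finset.sum_congr rfl (fun π _ => this π)]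
    simp [Finset.card_univ, Fintype.card_perm, mul_comm]
  rw [← h1, h2]

lemma exists_perm_pair {n : ℕ} {i j k l : Fin n} (hij : i ≠ j) (hkl : k ≠ l) :
    ∃ τ : Equiv.Perm (Fin n), τ i = k ∧ τ j = l := by
  refine ⟨(Equiv.swap (Equiv.swap i k j) l) * (Equiv.swap i k), ?_, ?_⟩
  · have hj'k : Equiv.swap i k j ≠ k := by
      rcases eq_or_ne j k with rfl | h
      · rw [Equiv.swap_apply_right]; exact hij
      · rw [Equiv.swap_apply_of_ne_of_ne hij.symm h]; exact h
    simp only [Perm.mul_apply, Equiv.swap_apply_left]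
    exact Equiv.swap_apply_of_ne_of_ne (Ne.symm hj'k) hkl
  · simp only [Perm.mul_apply]
    rw [show (Equiv.swap i k) j = Equiv.swap i k j from rfl, Equiv.swap_apply_left]

lemma sum_perm_apply_pair {n : ℕ} (i j : Fin n) (hij : i ≠ j) (h : Fin n → Fin n → ℝ) :
    (n : ℝ) * ((n : ℝ) - 1) * ∑ π : Equiv.Perm (Fin n), h (π i) (π j)
      = (n.factorial : ℝ) * ∑ p ∈ (univ : Finset (Fin n)).offDiag, h p.1 p.2 := by
  have hn : 0 < n := i.pos
  have indep : ∀ p ∈ (univ : Finset (Fin n)).offDiag,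
      ∑ π : Equiv.Perm (Fin n), h (π p.1) (π p.2) = ∑ π : Equiv.Perm (Fin n), h (π i) (π j) := by
    intro p hp
    obtain ⟨τ, hτ1, hτ2⟩ := exists_perm_pair hij (Finset.mem_offDiag.1 hp).2.2
    have := sum_perm_mul_right τ (fun π => h (π i) (π j))
    simp only [Perm.mul_apply, hτ1, hτ2] at this
    exact this
  have h1 : ∑ p ∈ (univ : Finset (Fin n)).offDiag, ∑ π : Equiv.Perm (Fin n), h (π p.1) (π p.2)
      = (n : ℝ) * ((n : ℝ) - 1) * ∑ π : Equiv.Perm (Fin n), h (π i) (π j) := by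
    rw [Finset.sum_congr rfl indep, Finset.sum_const, nsmul_eq_mul, Finset.offDiag_card,
      Finset.card_univ, Fintype.card_fin]
    have : ((n * n - n : ℕ) : ℝ) = (n : ℝ) * ((n : ℝ) - 1) := by
      rw [Nat.cast_sub (Nat.le_mul_of_pos_left n hn)]
      push_cast; ring
    rw [this]
  have h2 : ∑ p ∈ (univ : Finset (Fin n)).offDiag, ∑ π : Equiv.Perm (Fin n), h (π p.1) (π p.2)
      = (n.factorial : ℝ) * ∑ p ∈ (univ : Finset (Fin n)).offDiag, h p.1 p.2 := by
    rw [Finset.sum_comm]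
    have key : ∀ π : Equiv.Perm (Fin n),
        ∑ p ∈ (univ : Finset (Fin n)).offDiag, h (π p.1) (π p.2)
          = ∑ p ∈ (univ : Finset (Fin n)).offDiag, h p.1 p.2 := by
      intro π
      refine Finset.sum_equiv (Equiv.prodCongr π π) ?_ ?_
      · intro p
        simp [Finset.mem_offDiag, (Equiv.injective π).ne_iff]
      · intro p _; rfl
    rw [Finset.sum_congr rfl (fun π _ => key π), Finset.sum_const, nsmul_eq_mul,
      Finset.card_univ, Fintype.card_perm, Fintype.card_fin]
  rw [← h1, h2]

lemma card_perm' (n : ℕ) : (Finset.univ : Finset (Equiv.Perm (Fin n))).card = n.factorial := by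
  simp [Finset.card_univ, Fintype.card_perm, Fintype.card_fin]

lemma factorial_ne (n : ℕ) : ((n.factorial : ℝ)) ≠ 0 :=
  Nat.cast_ne_zero.2 n.factorial_ne_zero

lemma pexp_affine (n : ℕ) (f : Equiv.Perm (Fin n) → ℝ) (a b : ℝ) :
    pexp n (fun π => a * f π + b) = a * pexp n f + b := by
  unfold pexp
  rw [Finset.sum_add_distrib, ← Finset.mul_sum, Finset.sum_const, card_perm', nsmul_eq_mul]
  have := factorial_ne n
  field_simp

lemma pvar_affine (n : ℕ) (f : Equiv.Perm (Fin n) → ℝ) (a b : ℝ) :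
    pvar n (fun π => a * f π + b) = a ^ 2 * pvar n f := by
  unfold pvar
  rw [pexp_affine]
  have : (fun π => (a * f π + b - (a * pexp n f + b)) ^ 2)
      = fun π => a ^ 2 * (f π - pexp n f) ^ 2 + 0 := by
    funext π; ring
  rw [this, pexp_affine, add_zero]

lemma pvar_moments (n : ℕ) (f : Equiv.Perm (Fin n) → ℝ) :
    pvar n f = pexp n (fun π => f π ^ 2) - (pexp n f) ^ 2 := by
  unfold pvar pexp
  have expand : ∀ π : Equiv.Perm (Fin n),
      (f π - (∑ σ : Equiv.Perm (Fin n), f σ) / (n.factorial : ℝ)) ^ 2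
        = f π ^ 2 - (2 * ((∑ σ : Equiv.Perm (Fin n), f σ) / (n.factorial : ℝ))) * f π
            + ((∑ σ : Equiv.Perm (Fin n), f σ) / (n.factorial : ℝ)) ^ 2 := fun π => by ring
  rw [Finset.sum_congr rfl (fun π _ => expand π)]
  rw [Finset.sum_add_distrib, Finset.sum_sub_distrib, ← Finset.mul_sum,
    Finset.sum_const, card_perm', nsmul_eq_mul]
  have := factorial_ne n
  field_simp
  ring

lemma double_filter_sum {α : Type*} [Fintype α] (p : α → Prop) [DecidablePred p]
    (F : α → α → ℝ) :
    (∑ i : α, ∑ j : α, if p i ∧ p j then F i j else 0)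
      = ∑ i ∈ univ.filter p, ∑ j ∈ univ.filter p, F i j := by
  rw [Finset.sum_filter]
  refine Finset.sum_congr rfl fun i _ => ?_
  rw [Finset.sum_filter]
  by_cases hi : p i
  · simp only [hi, if_true, true_and]
  · simp only [hi, if_false, false_and, Finset.sum_const_zero]

end Aux

/-- Under the permutation null distribution, for all integers `0 ≤ t1 < t2 ≤ n`,
`Var(U_diff^π(t1,t2)) = 4(t2 − t1)(n − t2 + t1)(n−1)·(r1² − r0²)`. -/
theorem stmt6 (n : ℕ) (hn : 4 ≤ n) (R : Fin n → Fin n → ℝ)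
    (hsym : ∀ i j, R i j = R j i) (hdiag : ∀ i, R i i = 0)
    (t1 t2 : ℕ) (h12 : t1 < t2) (h2n : t2 ≤ n) :
    pvar n (fun π => Udiff n R π t1 t2)
      = 4 * ((t2 : ℝ) - t1) * ((n : ℝ) - t2 + t1) * ((n : ℝ) - 1)
          * (r1sq n R - (r0 n R) ^ 2) := by
  classical
  have hn0 : (n : ℝ) ≠ 0 := by positivity
  have hn1 : (n : ℝ) - 1 ≠ 0 := by
    have : (4 : ℝ) ≤ (n : ℝ) := by exact_mod_cast hn
    nlinarith
  have hfac : ((n.factorial : ℝ)) ≠ 0 := factorial_ne n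
  set v : Fin n → ℝ := fun k => ∑ l, R k l with hv
  set S : Finset (Fin n) := univ.filter (fun i => t1 ≤ (i : ℕ) ∧ (i : ℕ) < t2) with hS
  set Sc : Finset (Fin n) := univ.filter (fun i => ¬(t1 ≤ (i : ℕ) ∧ (i : ℕ) < t2)) with hSc
  set T : ℝ := ∑ k, v k with hT
  set f : Equiv.Perm (Fin n) → ℝ := fun π => ∑ i ∈ S, v (π i) with hf
  -- Step A: Udiff = 2 f - T
  have hU1 : ∀ π : Equiv.Perm (Fin n),
      U1 n R π t1 t2 = ∑ i ∈ S, ∑ j ∈ S, R (π i) (π j) := by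
    intro π
    have : U1 n R π t1 t2 = ∑ i : Fin n, ∑ j : Fin n,
        if (t1 ≤ (i : ℕ) ∧ (i : ℕ) < t2) ∧ (t1 ≤ (j : ℕ) ∧ (j : ℕ) < t2)
          then R (π i) (π j) else 0 := by
      unfold U1
      refine Finset.sum_congr rfl fun i _ => Finset.sum_congr rfl fun j _ => ?_
      exact if_congr (by tauto) rfl rfl
    rw [this, double_filter_sum]
  have hU2 : ∀ π : Equiv.Perm (Fin n),
      U2 n R π t1 t2 = ∑ i ∈ Sc, ∑ j ∈ Sc, R (π i) (π j) := by
    intro π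
    have : U2 n R π t1 t2 = ∑ i : Fin n, ∑ j : Fin n,
        if (¬(t1 ≤ (i : ℕ) ∧ (i : ℕ) < t2)) ∧ (¬(t1 ≤ (j : ℕ) ∧ (j : ℕ) < t2))
          then R (π i) (π j) else 0 := by
      unfold U2
      refine Finset.sum_congr rfl fun i _ => Finset.sum_congr rfl fun j _ => ?_
      exact if_congr (by constructor <;> intro h <;> constructor <;> omega) rfl rfl
    rw [this, double_filter_sum]
  have hsplit : ∀ g : Fin n → ℝ, (∑ i ∈ S, g i) + ∑ i ∈ Sc, g i = ∑ i, g i := fun g =>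
    Finset.sum_filter_add_sum_filter_not univ _ g
  have hfπ : ∀ π : Equiv.Perm (Fin n), f π = ∑ i ∈ S, ∑ j : Fin n, R (π i) (π j) := by
    intro π
    refine Finset.sum_congr rfl fun i _ => ?_
    exact (Equiv.sum_comp π (fun l => R (π i) l)).symm
  have hT' : ∀ π : Equiv.Perm (Fin n), (∑ i : Fin n, ∑ j : Fin n, R (π i) (π j)) = T := by
    intro π
    have h1 : ∀ i : Fin n, (∑ j : Fin n, R (π i) (π j)) = v (π i) := fun i =>
      Equiv.sum_comp π (fun l => R (π i) l)
    rw [Finset.sum_congr rfl (fun i _ => h1 i)]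
    exact Equiv.sum_comp π v
  have hUdiff : ∀ π : Equiv.Perm (Fin n), Udiff n R π t1 t2 = 2 * f π + (-T) := by
    intro π
    have hb : (∑ i ∈ S, ∑ j ∈ Sc, R (π i) (π j)) = ∑ i ∈ Sc, ∑ j ∈ S, R (π i) (π j) := by
      rw [Finset.sum_comm]
      exact Finset.sum_congr rfl fun i _ => Finset.sum_congr rfl fun j _ => hsym _ _
    have hfab : f π = (∑ i ∈ S, ∑ j ∈ S, R (π i) (π j))
        + ∑ i ∈ S, ∑ j ∈ Sc, R (π i) (π j) := by
      rw [hfπ π, ← Finset.sum_add_distrib]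
      exact Finset.sum_congr rfl fun i _ => (hsplit (fun j => R (π i) (π j))).symm
    have hTab : ((∑ i ∈ S, ∑ j ∈ S, R (π i) (π j)) + ∑ i ∈ S, ∑ j ∈ Sc, R (π i) (π j))
        + ((∑ i ∈ Sc, ∑ j ∈ S, R (π i) (π j)) + ∑ i ∈ Sc, ∑ j ∈ Sc, R (π i) (π j)) = T := by
      have h1 : (∑ i ∈ S, ∑ j ∈ S, R (π i) (π j)) + ∑ i ∈ S, ∑ j ∈ Sc, R (π i) (π j)
          = ∑ i ∈ S, ∑ j : Fin n, R (π i) (π j) := by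
        rw [← Finset.sum_add_distrib]
        exact Finset.sum_congr rfl fun i _ => hsplit (fun j => R (π i) (π j))
      have h2 : (∑ i ∈ Sc, ∑ j ∈ S, R (π i) (π j)) + ∑ i ∈ Sc, ∑ j ∈ Sc, R (π i) (π j)
          = ∑ i ∈ Sc, ∑ j : Fin n, R (π i) (π j) := by
        rw [← Finset.sum_add_distrib]
        exact Finset.sum_congr rfl fun i _ => hsplit (fun j => R (π i) (π j))
      rw [h1, h2, hsplit (fun i => ∑ j : Fin n, R (π i) (π j))]
      exact hT' π
    have hud : Udiff n R π t1 t2 = (∑ i ∈ S, ∑ j ∈ S, R (π i) (π j))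
        - ∑ i ∈ Sc, ∑ j ∈ Sc, R (π i) (π j) := by
      unfold Udiff
      rw [hU1 π, hU2 π]
    rw [hud, hfab, ← hTab]
    linarith [hb]
  -- reduce to variance of f
  have hfun : (fun π => Udiff n R π t1 t2) = fun π => 2 * f π + (-T) := funext hUdiff
  rw [hfun, pvar_affine, pvar_moments]
  -- set up scalar quantities
  set Sv : ℝ := ∑ k, v k with hSv
  set Q : ℝ := ∑ k, v k ^ 2 with hQ
  set OD : ℝ := ∑ p ∈ (univ : Finset (Fin n)).offDiag, v p.1 * v p.2 with hOD
  have hODval : OD = Sv * Sv - Q := by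
    have hsq : Sv * Sv = ∑ p ∈ (univ : Finset (Fin n)) ×ˢ univ, v p.1 * v p.2 := by
      rw [Finset.sum_mul_sum]
      rw [Finset.sum_product]
    have hunion : (∑ p ∈ (univ : Finset (Fin n)).diag, v p.1 * v p.2) + OD
        = ∑ p ∈ (univ : Finset (Fin n)) ×ˢ univ, v p.1 * v p.2 := by
      rw [hOD, ← Finset.sum_union (Finset.disjoint_diag_offDiag _), Finset.diag_union_offDiag]
    have hdiag : (∑ p ∈ (univ : Finset (Fin n)).diag, v p.1 * v p.2) = Q := by
      rw [Finset.sum_diag]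
      exact Finset.sum_congr rfl fun k _ => (sq (v k)) ▸ (pow_two (v k)).symm
    rw [← hsq] at hunion
    rw [← hdiag]
    linarith [hunion]
  -- first moment
  have hlin : ∀ i : Fin n, (∑ π : Equiv.Perm (Fin n), v (π i))
      = (n.factorial : ℝ) * Sv / n := by
    intro i
    have h := sum_perm_apply i v
    rw [eq_div_iff hn0]
    rw [mul_comm] at h
    exact h
  have hEf : (∑ π : Equiv.Perm (Fin n), f π) = (S.card : ℝ) * ((n.factorial : ℝ) * Sv / n) := by
    simp only [hf]
    rw [Finset.sum_comm, Finset.sum_congr rfl (fun i _ => hlin i), Finset.sum_const,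
      nsmul_eq_mul]
  -- second moment
  have hsq : ∀ i : Fin n, (∑ π : Equiv.Perm (Fin n), v (π i) * v (π i))
      = (n.factorial : ℝ) * Q / n := by
    intro i
    have h := sum_perm_apply i (fun k => v k ^ 2)
    rw [eq_div_iff hn0]
    have : (∑ π : Equiv.Perm (Fin n), v (π i) * v (π i))
        = ∑ π : Equiv.Perm (Fin n), (fun k => v k ^ 2) (π i) := by
      refine Finset.sum_congr rfl fun π _ => ?_
      simp [pow_two]
    rw [this, mul_comm]
    exact h
  have hpair : ∀ p : Fin n × Fin n, p ∈ S.offDiag →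
      (∑ π : Equiv.Perm (Fin n), v (π p.1) * v (π p.2))
        = (n.factorial : ℝ) * OD / ((n : ℝ) * ((n : ℝ) - 1)) := by
    intro p hp
    have hne : p.1 ≠ p.2 := (Finset.mem_offDiag.1 hp).2.2
    have h := sum_perm_apply_pair p.1 p.2 hne (fun k l => v k * v l)
    rw [eq_div_iff (mul_ne_zero hn0 hn1)]
    rw [mul_comm] at h
    exact h
  have hEf2 : (∑ π : Equiv.Perm (Fin n), f π ^ 2)
      = (S.card : ℝ) * ((n.factorial : ℝ) * Q / n)
        + ((S.card * S.card - S.card : ℕ) : ℝ)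
            * ((n.factorial : ℝ) * OD / ((n : ℝ) * ((n : ℝ) - 1))) := by
    have hf2 : ∀ π : Equiv.Perm (Fin n), f π ^ 2 = ∑ p ∈ S ×ˢ S, v (π p.1) * v (π p.2) := by
      intro π
      rw [pow_two, hf]
      rw [Finset.sum_mul_sum, Finset.sum_product]
    rw [Finset.sum_congr rfl (fun π _ => hf2 π), Finset.sum_comm]
    rw [← Finset.diag_union_offDiag S,
      Finset.sum_union (Finset.disjoint_diag_offDiag S)]
    have hd : (∑ p ∈ S.diag, ∑ π : Equiv.Perm (Fin n), v (π p.1) * v (π p.2))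
        = (S.card : ℝ) * ((n.factorial : ℝ) * Q / n) := by
      rw [Finset.sum_diag]
      rw [Finset.sum_congr rfl (fun i _ => hsq i), Finset.sum_const, nsmul_eq_mul]
    have ho : (∑ p ∈ S.offDiag, ∑ π : Equiv.Perm (Fin n), v (π p.1) * v (π p.2))
        = ((S.card * S.card - S.card : ℕ) : ℝ)
            * ((n.factorial : ℝ) * OD / ((n : ℝ) * ((n : ℝ) - 1))) := by
      rw [Finset.sum_congr rfl hpair, Finset.sum_const, nsmul_eq_mul, Finset.offDiag_card]
    rw [hd, ho]
  -- cardinality of S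
  have hScard : S.card = t2 - t1 := by
    have hattach : S = (Finset.Ico t1 t2).attachFin
        (fun m hm => lt_of_lt_of_le (Finset.mem_Ico.1 hm).2 h2n) := by
      ext a
      simp [hS, Finset.mem_attachFin, Finset.mem_Ico]
    rw [hattach, Finset.card_attachFin, Nat.card_Ico]
  have hmcast : ((S.card : ℕ) : ℝ) = (t2 : ℝ) - t1 := by
    rw [hScard, Nat.cast_sub h12.le]
  have hmcast2 : ((S.card * S.card - S.card : ℕ) : ℝ)
      = ((t2 : ℝ) - t1) * ((t2 : ℝ) - t1) - ((t2 : ℝ) - t1) := by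
    rw [Nat.cast_sub (Nat.le_mul_of_pos_left S.card (by omega : 0 < S.card))]
    push_cast
    rw [hmcast]
  -- unfold r0, r1sq
  have hr1 : r1sq n R = Q / (((n : ℝ) - 1) ^ 2 * n) := by
    unfold r1sq Rbar
    rw [show (∑ i : Fin n, ((∑ j, R i j) / ((n : ℝ) - 1)) ^ 2)
        = (∑ i : Fin n, (∑ j, R i j) ^ 2) / ((n : ℝ) - 1) ^ 2 by
      rw [Finset.sum_div]
      exact Finset.sum_congr rfl fun i _ => div_pow _ _ 2]
    rw [div_div]
  have hr0 : r0 n R = Sv / (((n : ℝ) - 1) * n) := by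
    unfold r0 Rbar
    rw [← Finset.sum_div, div_div]
  -- finish with algebra
  unfold pexp
  rw [hEf, hEf2, hmcast, hmcast2, hr1, hr0, hODval]
  field_simp
  ring
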